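/- Let n be a positive integer, let Ψ_1,…,Ψ_n be linearly independent unit vectors in ℂ^d, and let p_1,…,p_n be strictly positive reals with Σ_k p_k = 1. Let W be the n×n complex matrix with entries W_{ij} = √(p_i p_j)·⟨Ψ_i, Ψ_j⟩. Then there exists a POVM (M_k)_{k=1}^n on ℂ^d such that Σ_{k=1}^n p_k ⟨Ψ_k, M_k Ψ_k⟩ ≥ (tr √W)² / n. -/

import Mathlib

open Matrix BigOperators
open scoped ComplexOrder

namespace Matrix.PosSemidef

/-- The positive semidefinite square root of a positive semidefinite matrix
(the definition `Matrix.PosSemidef.sqrt` of the older Mathlib, removed since). -/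
noncomputable def sqrt {n 𝕜 : Type*} [Fintype n] [DecidableEq n] [RCLike 𝕜]
    {A : Matrix n n 𝕜} (hA : A.PosSemidef) : Matrix n n 𝕜 :=
  hA.1.eigenvectorUnitary.1 * diagonal ((↑) ∘ (√·) ∘ hA.1.eigenvalues) *
  (star hA.1.eigenvectorUnitary : Matrix n n 𝕜)

end Matrix.PosSemidef

theorem cpl_sqrt_conjTranspose {m : Type*} [Fintype m] [DecidableEq m] {A : Matrix m m ℂ}
    (hA : A.PosSemidef) : (hA.sqrt)ᴴ = hA.sqrt := by
  have hs : star (Complex.ofReal ∘ (fun x => √x) ∘ hA.1.eigenvalues)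
      = Complex.ofReal ∘ (fun x => √x) ∘ hA.1.eigenvalues := by
    funext i; simp
  unfold Matrix.PosSemidef.sqrt
  simp [Matrix.conjTranspose_mul, Matrix.diagonal_conjTranspose, Matrix.mul_assoc, hs,
    Matrix.star_eq_conjTranspose]

theorem cpl_sqrt_mul_self {m : Type*} [Fintype m] [DecidableEq m] {A : Matrix m m ℂ}
    (hA : A.PosSemidef) : hA.sqrt * hA.sqrt = A := by
  have hU : (star hA.1.eigenvectorUnitary : Matrix m m ℂ) * hA.1.eigenvectorUnitary.1 = 1 :=
    Unitary.coe_star_mul_self _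
  conv_rhs => rw [hA.1.spectral_theorem, Unitary.conjStarAlgAut_apply]
  unfold Matrix.PosSemidef.sqrt
  simp only [Matrix.mul_assoc]
  rw [← Matrix.mul_assoc (star _ : Matrix m m ℂ) _ _, hU, Matrix.one_mul,
    ← Matrix.mul_assoc (diagonal _) (diagonal _), diagonal_mul_diagonal]
  congr 3
  ext i
  simp only [Function.comp_apply]
  rw [← RCLike.ofReal_mul, Real.mul_self_sqrt (hA.eigenvalues_nonneg i)]

/-- lower bound on optimal discrimination probability, achieved by some POVM. -/
theorem change_point_lower_bound
    (n d : ℕ) (hn : 0 < n)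
    (Ψ : Fin n → (Fin d → ℂ))
    (hlin : LinearIndependent ℂ Ψ)
    (hunit : ∀ k, star (Ψ k) ⬝ᵥ Ψ k = 1)
    (p : Fin n → ℝ) (hp : ∀ k, 0 < p k) (hpsum : ∑ k, p k = 1)
    (W : Matrix (Fin n) (Fin n) ℂ)
    (hWdef : ∀ i j, W i j = (Real.sqrt (p i * p j) : ℂ) * (star (Ψ i) ⬝ᵥ Ψ j))
    (hW : W.PosSemidef) :
    ∃ M : Fin n → Matrix (Fin d) (Fin d) ℂ,
      (∀ k, (M k).PosSemidef) ∧ (∑ k, M k = 1) ∧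
      (hW.sqrt.trace.re) ^ 2 / n ≤
        ∑ k, p k * (star (Ψ k) ⬝ᵥ ((M k).mulVec (Ψ k))).re := by
  classical
  set k0 : Fin n := ⟨0, hn⟩ with hk0
  set φ : Fin n → (Fin d → ℂ) := fun k => (Real.sqrt (p k) : ℂ) • Ψ k with hφdef
  set A : Matrix (Fin n) (Fin d) ℂ := Matrix.of (fun k m => star (φ k m)) with hAdef
  have hAφ : ∀ k m, star (A k m) = φ k m := by intro k m; simp [hAdef]
  have hWA : W = A * Aᴴ := by
    ext i j
    rw [hWdef]
    simp only [Matrix.mul_apply, Matrix.conjTranspose_apply, hAdef, Matrix.of_apply,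
      dotProduct, Pi.star_apply, hφdef, Pi.smul_apply, smul_eq_mul]
    rw [Real.sqrt_mul (hp i).le, Complex.ofReal_mul, Finset.mul_sum]
    refine Finset.sum_congr rfl fun m _ => ?_
    simp only [Complex.star_def, _root_.map_mul, Complex.conj_ofReal, Complex.conj_conj]
    ring
  -- W is positive definite
  have hφlin : ∀ x : Fin n → ℂ, Aᴴ *ᵥ x = 0 → x = 0 := by
    intro x hx
    have h2 : ∑ k, (x k * (Real.sqrt (p k) : ℂ)) • Ψ k = 0 := by
      funext m
      have := congrFun hx m
      simpa [Matrix.mulVec, dotProduct, Matrix.conjTranspose_apply, hAdef, hφdef,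
        Finset.sum_apply, mul_comm, mul_assoc, mul_left_comm] using this
    have h3 := (Fintype.linearIndependent_iff.mp hlin) _ h2
    funext k
    have h4 := h3 k
    have h5 : (Real.sqrt (p k) : ℂ) ≠ 0 := by
      simpa using (Real.sqrt_ne_zero (hp k).le).mpr (hp k).ne'
    exact mul_eq_zero.mp h4 |>.resolve_right h5
  have hWpd : W.PosDef := by
    refine Matrix.PosDef.of_dotProduct_mulVec_pos hW.1 fun x hx =>
      lt_of_le_of_ne (hW.dotProduct_mulVec_nonneg x) (Ne.symm ?_)
    intro h0
    have : Aᴴ *ᵥ x = 0 := by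
      rw [hWA, ← Matrix.mulVec_mulVec, Matrix.dotProduct_mulVec] at h0
      have h1 : star (Aᴴ *ᵥ x) ⬝ᵥ (Aᴴ *ᵥ x) = 0 := by
        rw [Matrix.star_mulVec, Matrix.conjTranspose_conjTranspose]; exact h0
      exact dotProduct_star_self_eq_zero.mp h1
    exact hx (hφlin x this)
  set Q : Matrix (Fin n) (Fin n) ℂ := hW.sqrt with hQdef
  have hQH : Qᴴ = Q := cpl_sqrt_conjTranspose hW
  have hQQ : Q * Q = W := cpl_sqrt_mul_self hW
  have hdet : IsUnit Q.det := by
    refine isUnit_iff_ne_zero.mpr fun h => ?_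
    have : W.det = 0 := by rw [← hQQ, Matrix.det_mul, h, mul_zero]
    exact ((Matrix.isUnit_iff_isUnit_det W).mp hWpd.isUnit).ne_zero this
  set S : Matrix (Fin n) (Fin n) ℂ := Q⁻¹ with hSdef
  have hQS : Q * S = 1 := Matrix.mul_nonsing_inv Q hdet
  have hSQ : S * Q = 1 := Matrix.nonsing_inv_mul Q hdet
  have hSH : Sᴴ = S := by rw [hSdef, Matrix.conjTranspose_nonsing_inv, hQH]
  have hSW : S * W = Q := by rw [← hQQ, ← mul_assoc, hSQ, one_mul]
  have hSWS : S * W * S = 1 := by rw [hSW, hQS]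
  set B : Matrix (Fin n) (Fin d) ℂ := S * A with hBdef
  have hBB : B * Bᴴ = 1 := by
    rw [hBdef, Matrix.conjTranspose_mul, hSH, ← Matrix.mul_assoc (S * A) Aᴴ S,
      Matrix.mul_assoc S A Aᴴ, ← hWA, hSWS]
  have hBA : B * Aᴴ = Q := by
    rw [hBdef, Matrix.mul_assoc, ← hWA, hSW]
  set P : Matrix (Fin d) (Fin d) ℂ := Bᴴ * B with hPdef
  have hPH : Pᴴ = P := by
    rw [hPdef, Matrix.conjTranspose_mul, Matrix.conjTranspose_conjTranspose]
  have hP2 : P * P = P := by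
    rw [hPdef, Matrix.mul_assoc, ← Matrix.mul_assoc B Bᴴ B, hBB, Matrix.one_mul]
  have hProj : (1 - P).PosSemidef := by
    have h1 : (1 - P)ᴴ * (1 - P) = 1 - P := by
      rw [Matrix.conjTranspose_sub, Matrix.conjTranspose_one, hPH, sub_mul, mul_sub, mul_sub]
      simp only [Matrix.one_mul, Matrix.mul_one, hP2, ← hPdef]
      abel
    rw [← h1]
    exact Matrix.posSemidef_conjTranspose_mul_self _
  set M0 : Fin n → Matrix (Fin d) (Fin d) ℂ :=
    fun k => Matrix.of (fun i j => star (B k i) * B k j) with hM0def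
  have hM0psd : ∀ k, (M0 k).PosSemidef := by
    intro k
    have h : M0 k = (Matrix.of (fun (_ : Fin 1) j => B k j))ᴴ *
        (Matrix.of (fun (_ : Fin 1) j => B k j)) := by
      ext i j
      simp [hM0def, Matrix.mul_apply]
    rw [h]
    exact Matrix.posSemidef_conjTranspose_mul_self _
  have hM0sum : ∑ k, M0 k = P := by
    ext i j
    simp [Matrix.sum_apply, hM0def, hPdef, Matrix.mul_apply, Matrix.conjTranspose_apply]
  set M : Fin n → Matrix (Fin d) (Fin d) ℂ :=
    fun k => M0 k + if k = k0 then 1 - P else 0 with hMdef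
  have hMpsd : ∀ k, (M k).PosSemidef := by
    intro k
    refine (hM0psd k).add ?_
    by_cases h : k = k0 <;> simp [h, hProj, Matrix.PosSemidef.zero]
  have hMsum : ∑ k, M k = 1 := by
    rw [hMdef]
    rw [Finset.sum_add_distrib, hM0sum, Finset.sum_ite_eq' Finset.univ k0
      (fun _ => (1 : Matrix (Fin d) (Fin d) ℂ) - P)]
    simp
  refine ⟨M, hMpsd, hMsum, ?_⟩
  -- quadratic form scaling
  have hφquad : ∀ k (X : Matrix (Fin d) (Fin d) ℂ),
      star (φ k) ⬝ᵥ X *ᵥ (φ k) = (p k : ℂ) * (star (Ψ k) ⬝ᵥ X *ᵥ (Ψ k)) := by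
    intro k X
    rw [hφdef]
    simp only [star_smul, smul_dotProduct, Matrix.mulVec_smul, dotProduct_smul,
      smul_eq_mul, Complex.star_def, Complex.conj_ofReal]
    rw [← mul_assoc, ← Complex.ofReal_mul, Real.mul_self_sqrt (hp k).le]
  -- the diagonal entries
  have ht : ∀ k, (∑ j, B k j * φ k j) = Q k k := by
    intro k
    have h := congrFun (congrFun hBA k) k
    rw [← h, Matrix.mul_apply]
    refine Finset.sum_congr rfl fun j _ => ?_
    rw [Matrix.conjTranspose_apply, hAφ]
  have hquadk : ∀ k, star (φ k) ⬝ᵥ (M0 k) *ᵥ (φ k) = star (Q k k) * (Q k k) := by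
    intro k
    have h1 : star (φ k) ⬝ᵥ (M0 k) *ᵥ (φ k)
        = (∑ i, star (B k i) * star (φ k i)) * (∑ j, B k j * φ k j) := by
      simp only [dotProduct, Matrix.mulVec, Pi.star_apply, hM0def, Matrix.of_apply]
      rw [Finset.sum_mul]
      refine Finset.sum_congr rfl fun i _ => ?_
      rw [Finset.mul_sum, Finset.mul_sum]
      refine Finset.sum_congr rfl fun j _ => by ring
    rw [h1, ← ht k]
    congr 1
    rw [star_sum]
    refine Finset.sum_congr rfl fun i _ => ?_
    rw [star_mul']
  -- per-term lower bound
  have hterm : ∀ k, ((Q k k).re) ^ 2 ≤ p k * (star (Ψ k) ⬝ᵥ (M k) *ᵥ (Ψ k)).re := by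
    intro k
    have h1 : p k * (star (Ψ k) ⬝ᵥ (M k) *ᵥ (Ψ k)).re
        = (star (φ k) ⬝ᵥ (M k) *ᵥ (φ k)).re := by
      rw [hφquad k (M k), Complex.re_ofReal_mul]
    rw [h1, hMdef]
    simp only [Matrix.add_mulVec, dotProduct_add, Complex.add_re]
    have h2 : (star (φ k) ⬝ᵥ (M0 k) *ᵥ (φ k)).re = Complex.normSq (Q k k) := by
      rw [hquadk k]
      simp [Complex.normSq_apply, Complex.mul_re]
    have h3 : 0 ≤ (star (φ k) ⬝ᵥ (if k = k0 then 1 - P else 0) *ᵥ (φ k)).re := by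
      by_cases h : k = k0
      · rw [if_pos h]
        simpa using (Complex.le_def.mp (hProj.dotProduct_mulVec_nonneg (φ k))).1
      · simp [h]
    have h4 : ((Q k k).re) ^ 2 ≤ Complex.normSq (Q k k) := by
      rw [Complex.normSq_apply]
      nlinarith [sq_nonneg (Q k k).im]
    rw [h2]
    linarith
  -- Cauchy-Schwarz
  have hcs : (∑ k, (Q k k).re) ^ 2 ≤ (n : ℝ) * ∑ k, ((Q k k).re) ^ 2 := by
    simpa using sq_sum_le_card_mul_sum_sq (s := Finset.univ) (f := fun k => (Q k k).re)
  have htr : Q.trace.re = ∑ k, (Q k k).re := by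
    simp [Matrix.trace, Matrix.diag, Complex.re_sum]
  have hnpos : (0 : ℝ) < n := by exact_mod_cast hn
  rw [div_le_iff₀ hnpos]
  calc Q.trace.re ^ 2 = (∑ k, (Q k k).re) ^ 2 := by rw [htr]
    _ ≤ (n : ℝ) * ∑ k, ((Q k k).re) ^ 2 := hcs
    _ ≤ (n : ℝ) * ∑ k, p k * (star (Ψ k) ⬝ᵥ (M k) *ᵥ (Ψ k)).re := by
        refine mul_le_mul_of_nonneg_left (Finset.sum_le_sum fun k _ => hterm k) hnpos.le
    _ = (∑ k, p k * (star (Ψ k) ⬝ᵥ (M k) *ᵥ (Ψ k)).re) * n := by ring
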